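/- Let A ∈ ℝ^{n×n×s} with ξ(A) of spectral radius less than 1, B ∈ ℝ^{n×m×s}, and let W_c solve the T-Lyapunov equation W_c − A⊛W_c⊛A^T = B⊛B^T. Then ξ(W_c) equals the controllability Gramian of the linear system (ξ(A), ξ(B)), i.e., ξ(W_c) = Σ_{k=0}^{∞} ξ(A)^k ξ(B)ξ(B)^T (ξ(A)^T)^k, and ξ(W_c) is positive semidefinite. -/

import Mathlib

open scoped Matrix
/-- A third-order tensor of size `n × m × s` is represented by its `s` frontal slices. -/
abbrev Tensor3 (n m s : ℕ) := ZMod s → Matrix (Fin n) (Fin m) ℝ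

/-- The block circulant operator `ξ`: the `(i, j)` block is the frontal slice `A_{i - j mod s}`. -/
def bcirc {n m s : ℕ} (A : Tensor3 n m s) :
    Matrix (ZMod s × Fin n) (ZMod s × Fin m) ℝ :=
  fun p q => A (p.1 - q.1) p.2 q.2

/-- The T-product `A ⊛ B = μ⁻¹(ξ(A) · μ(B))`, whose `k`-th frontal slice is the circular
convolution `∑ⱼ A_{k-j} · B_j` of the frontal slices. -/
def tProd {n m h s : ℕ} [NeZero s] (A : Tensor3 n m s) (B : Tensor3 m h s) :
    Tensor3 n h s :=
  fun k => ∑ j : ZMod s, A (k - j) * B j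


/-- The T-transpose: each frontal slice is transposed and the order of slices 2,…,s reversed. -/
def tTrans {n m s : ℕ} (A : Tensor3 n m s) : Tensor3 m n s :=
  fun k => (A (-k))ᵀ

/-- The T-identity tensor: first frontal slice the identity matrix, the others zero. -/
def tId (n s : ℕ) : Tensor3 n n s :=
  fun k => if k = 0 then 1 else 0

/-- `k`-fold T-product power of a tensor, `A^0 = I`. -/
def tPow {n s : ℕ} [NeZero s] (A : Tensor3 n n s) : ℕ → Tensor3 n n s
  | 0 => tId n s
  | k + 1 => tProd A (tPow A k)

section GelfandAux

attribute [local instance] Matrix.linftyOpNormedRing Matrix.linftyOpNormedAlgebra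

/-- If the complexification of a real matrix has spectral radius `< 1`, then the entries of its
powers decay geometrically. -/
lemma pow_entry_bound {ι : Type*} [Fintype ι] [DecidableEq ι] (M : Matrix ι ι ℝ)
    (h : spectralRadius ℂ (M.map (fun x => (x : ℂ))) < 1) :
    ∃ (r : ℝ) (K : ℕ), 0 ≤ r ∧ r < 1 ∧ ∀ k, K ≤ k → ∀ p q, |(M ^ k) p q| ≤ r ^ k := by
  classical
  haveI : CompleteSpace (Matrix ι ι ℂ) :=
    inferInstanceAs (CompleteSpace (ι → ι → ℂ))
  set Mc := M.map (fun x => (x : ℂ)) with hMc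
  obtain ⟨r', hr1, hr2⟩ := exists_between h
  have hrt : r' ≠ ⊤ := (hr2.trans_le le_top).ne
  set ρ : NNReal := r'.toNNReal with hρ
  have hρcoe : (ρ : ENNReal) = r' := ENNReal.coe_toNNReal hrt
  have hρ1 : ρ < 1 := by
    rw [← ENNReal.coe_lt_one_iff, hρcoe]; exact hr2
  have hg := spectrum.pow_nnnorm_pow_one_div_tendsto_nhds_spectralRadius Mc
  have hev := hg.eventually_lt_const hr1
  rw [Filter.eventually_atTop] at hev
  obtain ⟨K0, hK⟩ := hev
  refine ⟨ρ, max K0 1, ρ.coe_nonneg, by exact_mod_cast hρ1, ?_⟩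
  intro k hk p q
  have hk1 : 1 ≤ k := le_trans (le_max_right _ _) hk
  have hk0 : (k : ℝ) ≠ 0 := by positivity
  have h1 : (‖Mc ^ k‖₊ : ENNReal) ^ (1 / (k : ℝ)) < r' := hK k (le_trans (le_max_left _ _) hk)
  have h2 : (‖Mc ^ k‖₊ : ENNReal) ≤ r' ^ k := by
    have h3 := ENNReal.rpow_le_rpow h1.le (by positivity : (0:ℝ) ≤ (k : ℝ))
    rwa [← ENNReal.rpow_mul, one_div, inv_mul_cancel₀ hk0, ENNReal.rpow_one,
      ENNReal.rpow_natCast] at h3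
  have h4 : ‖Mc ^ k‖₊ ≤ ρ ^ k := by
    rw [← hρcoe, ← ENNReal.coe_pow, ENNReal.coe_le_coe] at h2
    exact h2
  have hentry : ‖(Mc ^ k) p q‖₊ ≤ ‖Mc ^ k‖₊ := by
    refine le_trans (Finset.single_le_sum (f := fun j => ‖(Mc ^ k) p j‖₊)
      (fun _ _ => zero_le) (Finset.mem_univ q)) ?_
    rw [Matrix.linfty_opNNNorm_def]
    exact Finset.le_sup (f := fun i => ∑ j, ‖(Mc ^ k) i j‖₊) (Finset.mem_univ p)
  have hmap : Mc ^ k = (M ^ k).map (fun x => (x : ℂ)) := by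
    have := map_pow (Complex.ofRealHom.mapMatrix : Matrix ι ι ℝ →+* Matrix ι ι ℂ) M k
    exact this.symm
  have : |(M ^ k) p q| ≤ (ρ : ℝ) ^ k := by
    have h5 := le_trans hentry h4
    rw [hmap] at h5
    have h6 := (NNReal.coe_le_coe.mpr h5 :)
    simpa [Matrix.map_apply, Real.norm_eq_abs] using h6
  exact this

end GelfandAux

lemma bcirc_tProd {n m h s : ℕ} [NeZero s] (A : Tensor3 n m s) (B : Tensor3 m h s) :
    bcirc (tProd A B) = bcirc A * bcirc B := by
  ext ⟨i, p⟩ ⟨j, q⟩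
  simp only [bcirc, tProd, Matrix.mul_apply, Matrix.sum_apply, Fintype.sum_prod_type]
  rw [← Equiv.sum_comp (Equiv.addRight j) (fun c => ∑ r, A (i - c) p r * B (c - j) r q)]
  simp only [Equiv.coe_addRight]
  congr 1 with c
  congr 1 with r
  congr 2
  · ring
  · ring

lemma bcirc_tTrans {n m s : ℕ} (A : Tensor3 n m s) :
    bcirc (tTrans A) = (bcirc A)ᵀ := by
  ext ⟨i, p⟩ ⟨j, q⟩
  simp only [bcirc, tTrans, Matrix.transpose_apply, neg_sub]

lemma bcirc_sub {n m s : ℕ} (X Y : Tensor3 n m s) :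
    bcirc (X - Y) = bcirc X - bcirc Y := by
  ext ⟨i, p⟩ ⟨j, q⟩
  simp [bcirc]

/-- If `W` solves the T-Lyapunov equation, then `ξ(W)` is the controllability Gramian of the
unfolded linear system `(ξ(A), ξ(B))`, and it is positive semidefinite. -/
theorem bcirc_tLyapunov_solution {n m s : ℕ} [NeZero s]
    (A : Tensor3 n n s) (B : Tensor3 n m s) (W : Tensor3 n n s)
    (hA : spectralRadius ℂ ((bcirc A).map (fun x => (x : ℂ))) < 1)
    (hW : W - tProd (tProd A W) (tTrans A) = tProd B (tTrans B)) :
    HasSum (fun k : ℕ => bcirc A ^ k * bcirc B * (bcirc B)ᵀ * ((bcirc A)ᵀ) ^ k) (bcirc W) ∧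
      (bcirc W).PosSemidef := by
  classical
  set M := bcirc A with hMdef
  set Wc := bcirc W with hWcdef
  set Bc := bcirc B with hBcdef
  set S := Bc * Bcᵀ with hSdef
  have key : Wc - M * Wc * Mᵀ = S := by
    have h := congrArg bcirc hW
    rwa [bcirc_sub, bcirc_tProd, bcirc_tProd, bcirc_tProd, bcirc_tTrans, bcirc_tTrans] at h
  set T : ℕ → Matrix (ZMod s × Fin n) (ZMod s × Fin n) ℝ :=
    fun k => M ^ k * S * (M ^ k)ᵀ with hTdef
  have hWS : M * Wc * Mᵀ = Wc - S := by
    rw [← key]; abel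
  have hrec : ∀ N, ∑ k ∈ Finset.range N, T k = Wc - M ^ N * Wc * (M ^ N)ᵀ := by
    intro N
    induction N with
    | zero => simp
    | succ N ih =>
      rw [Finset.sum_range_succ, ih, hTdef]
      have hp : M ^ (N + 1) * Wc * (M ^ (N + 1))ᵀ = M ^ N * (M * Wc * Mᵀ) * (M ^ N)ᵀ := by
        rw [pow_succ]
        simp [Matrix.transpose_mul, Matrix.mul_assoc]
      rw [hp, hWS, Matrix.mul_sub, Matrix.sub_mul]
      abel
  obtain ⟨r, K, hr0, hr1, hbd⟩ := pow_entry_bound M hA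
  have hr2 : r ^ 2 < 1 := by nlinarith
  have hr2' : (0:ℝ) ≤ r ^ 2 := by positivity
  -- uniform entrywise bound for sandwiched matrices
  have hXbd : ∀ (X : Matrix (ZMod s × Fin n) (ZMod s × Fin n) ℝ) (k), K ≤ k → ∀ p q,
      |(M ^ k * X * (M ^ k)ᵀ) p q| ≤ (∑ b, ∑ a, |X a b|) * (r ^ 2) ^ k := by
    intro X k hk p q
    have expand : (M ^ k * X * (M ^ k)ᵀ) p q
        = ∑ b, ∑ a, (M ^ k) p a * X a b * (M ^ k) q b := by
      simp [Matrix.mul_apply, ← Matrix.transpose_pow, Matrix.transpose_apply, Finset.sum_mul]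
    rw [expand]
    calc |∑ b, ∑ a, (M ^ k) p a * X a b * (M ^ k) q b|
        ≤ ∑ b, ∑ a, |(M ^ k) p a * X a b * (M ^ k) q b| :=
          le_trans (Finset.abs_sum_le_sum_abs _ _)
            (Finset.sum_le_sum fun b _ => Finset.abs_sum_le_sum_abs _ _)
      _ ≤ ∑ b, ∑ a, |X a b| * (r ^ 2) ^ k := by
          refine Finset.sum_le_sum fun b _ => Finset.sum_le_sum fun a _ => ?_
          rw [abs_mul, abs_mul]
          have h1 := hbd k hk p a
          have h2 := hbd k hk q b
          have h3 : |(M ^ k) p a| * |X a b| * |(M ^ k) q b| ≤ r ^ k * |X a b| * r ^ k := by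
            have hnn : (0:ℝ) ≤ r ^ k := by positivity
            exact mul_le_mul (mul_le_mul h1 le_rfl (abs_nonneg _) hnn) h2 (abs_nonneg _)
              (by positivity)
          calc |(M ^ k) p a| * |X a b| * |(M ^ k) q b| ≤ r ^ k * |X a b| * r ^ k := h3
            _ = |X a b| * (r ^ 2) ^ k := by ring
      _ = (∑ b, ∑ a, |X a b|) * (r ^ 2) ^ k := by
          rw [Finset.sum_mul]
          exact Finset.sum_congr rfl fun b _ => (Finset.sum_mul _ _ _).symm
  -- entrywise HasSum
  have hentry : ∀ p q, HasSum (fun k => T k p q) (Wc p q) := by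
    intro p q
    have hgeo : Summable (fun k : ℕ => (∑ b, ∑ a, |S a b|) * (r ^ 2) ^ k) :=
      (summable_geometric_of_lt_one hr2' hr2).mul_left _
    have hsummable : Summable (fun k => T k p q) := by
      refine Summable.of_norm_bounded_eventually_nat hgeo ?_
      filter_upwards [Filter.eventually_atTop.mpr ⟨K, fun k (hk : K ≤ k) => hXbd S k hk p q⟩]
        with k hk
      rw [Real.norm_eq_abs]
      exact hk
    have htend0 : Filter.Tendsto (fun N : ℕ => (M ^ N * Wc * (M ^ N)ᵀ) p q)
        Filter.atTop (nhds 0) := by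
      have h0 : Filter.Tendsto (fun N : ℕ => (∑ b, ∑ a, |Wc a b|) * (r ^ 2) ^ N)
          Filter.atTop (nhds 0) := by
        simpa using (tendsto_pow_atTop_nhds_zero_of_lt_one hr2' hr2).const_mul
          (∑ b, ∑ a, |Wc a b|)
      refine squeeze_zero_norm' ?_ h0
      filter_upwards [Filter.eventually_atTop.mpr ⟨K, fun k (hk : K ≤ k) => hXbd Wc k hk p q⟩]
        with N hN
      rw [Real.norm_eq_abs]
      exact hN
    have hps : Filter.Tendsto (fun N => ∑ k ∈ Finset.range N, T k p q)
        Filter.atTop (nhds (Wc p q)) := by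
      have heq : ∀ N, ∑ k ∈ Finset.range N, T k p q
          = Wc p q - (M ^ N * Wc * (M ^ N)ᵀ) p q := by
        intro N
        rw [← Matrix.sub_apply, ← hrec N, Matrix.sum_apply]
      simp only [heq]
      simpa using tendsto_const_nhds.sub htend0
    have huniq : ∑' k, T k p q = Wc p q :=
      tendsto_nhds_unique hsummable.hasSum.tendsto_sum_nat hps
    exact huniq ▸ hsummable.hasSum
  have hsum : HasSum T Wc := Pi.hasSum.mpr fun p => Pi.hasSum.mpr fun q => hentry p q
  have hTeq : (fun k : ℕ => bcirc A ^ k * bcirc B * (bcirc B)ᵀ * ((bcirc A)ᵀ) ^ k) = T := by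
    funext k
    simp only [← hMdef, ← hBcdef, hTdef, hSdef, ← Matrix.transpose_pow, Matrix.mul_assoc]
  constructor
  · rw [hTeq]; exact hsum
  · -- positive semidefiniteness
    have hTsymm : ∀ k, (T k)ᵀ = T k := by
      intro k
      simp [hTdef, hSdef, Matrix.transpose_mul, Matrix.mul_assoc]
    have hWcsymm : Wcᵀ = Wc := by
      have h1 : HasSum (fun k => (T k)ᵀ) Wcᵀ := hsum.matrix_transpose
      simp only [hTsymm] at h1
      exact h1.unique hsum
    have hherm : Wc.IsHermitian := by
      show Wcᴴ = Wc
      have : Wcᴴ = Wcᵀ := by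
        ext i j
        simp [Matrix.conjTranspose_apply]
      rw [this, hWcsymm]
    refine Matrix.PosSemidef.of_dotProduct_mulVec_nonneg hherm fun x => ?_
    have hstar : star x = x := funext fun i => star_trivial _
    rw [hstar]
    set g : Matrix (ZMod s × Fin n) (ZMod s × Fin n) ℝ →+ ℝ :=
      AddMonoidHom.mk' (fun X => x ⬝ᵥ (X *ᵥ x))
        (by intro X Y; simp [Matrix.add_mulVec, dotProduct_add]) with hg
    have hcont : Continuous fun X : Matrix (ZMod s × Fin n) (ZMod s × Fin n) ℝ =>
        x ⬝ᵥ (X *ᵥ x) :=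
      continuous_const.dotProduct (continuous_id.matrix_mulVec continuous_const)
    have hmap : HasSum (fun k => x ⬝ᵥ (T k *ᵥ x)) (x ⬝ᵥ (Wc *ᵥ x)) :=
      hsum.map g hcont
    have hterm : ∀ k, 0 ≤ x ⬝ᵥ (T k *ᵥ x) := by
      intro k
      have hfact : T k = (M ^ k * Bc) * (M ^ k * Bc)ᵀ := by
        simp [hTdef, hSdef, Matrix.transpose_mul, Matrix.mul_assoc]
      rw [hfact, ← Matrix.mulVec_mulVec, Matrix.dotProduct_mulVec, Matrix.mulVec_transpose]
      exact Finset.sum_nonneg fun i _ => mul_self_nonneg _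
    exact hasSum_le (fun k => hterm k) hasSum_zero hmap
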